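/- Let A and B be n×n Hermitian matrices with eigenvalues in decreasing order λ₁(A) ≥ ⋯ ≥ λₙ(A) and λ₁(B) ≥ ⋯ ≥ λₙ(B), and suppose λₙ(A) + λₙ(B) ≥ 0. Then ∏_{i=1}^{n} (λᵢ(A) + λᵢ(B)) ≤ det(A + B) ≤ ∏_{i=1}^{n} (λᵢ(A) + λ_{n−i+1}(B)). -/

import Mathlib

open Finset

-- Auxiliary development (Lidskii's theorem etc.)
open Finset Matrix

namespace FiedlerAux

variable {n : ℕ}

noncomputable def qf (M : Matrix (Fin n) (Fin n) ℂ) (x : Fin n → ℂ) : ℝ :=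
  (star x ⬝ᵥ M *ᵥ x).re

noncomputable def nsq (x : Fin n → ℂ) : ℝ := ∑ r, Complex.normSq (x r)

lemma star_dot_self (x : Fin n → ℂ) : star x ⬝ᵥ x = (nsq x : ℂ) := by
  simp only [dotProduct, nsq, Pi.star_apply, Complex.ofReal_sum]
  refine Finset.sum_congr rfl fun r _ => ?_
  rw [RCLike.star_def, Complex.normSq_eq_conj_mul_self]

lemma nsq_nonneg (x : Fin n → ℂ) : 0 ≤ nsq x :=
  Finset.sum_nonneg fun r _ => Complex.normSq_nonneg _

lemma nsq_pos_of_ne_zero {x : Fin n → ℂ} (hx : x ≠ 0) : 0 < nsq x := by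
  obtain ⟨r, hr⟩ : ∃ r, x r ≠ 0 := by
    by_contra h; push_neg at h; exact hx (funext h)
  have : 0 < Complex.normSq (x r) := Complex.normSq_pos.2 hr
  exact lt_of_lt_of_le this (Finset.single_le_sum (fun i _ => Complex.normSq_nonneg _)
    (Finset.mem_univ r))

lemma qf_add (M N : Matrix (Fin n) (Fin n) ℂ) (x : Fin n → ℂ) :
    qf (M + N) x = qf M x + qf N x := by
  simp [qf, add_mulVec, dotProduct_add]

lemma star_dot_comm (x y : Fin n → ℂ) :
    star x ⬝ᵥ y = starRingEnd ℂ (star y ⬝ᵥ x) := by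
  simp only [dotProduct, Pi.star_apply, map_sum, RingHom.map_mul, RCLike.star_def,
    Complex.conj_conj]
  exact Finset.sum_congr rfl fun r _ => mul_comm _ _

lemma dot_sum {m : ℕ} (v : Fin n → ℂ) (f : Fin m → Fin n → ℂ) :
    v ⬝ᵥ (∑ i, f i) = ∑ i, v ⬝ᵥ f i := by
  simp only [dotProduct, Finset.sum_apply, Finset.mul_sum]
  exact Finset.sum_comm

/-- An orthonormal eigensystem for a matrix `H` with eigenvalue tuple `lam`. -/
structure ES (H : Matrix (Fin n) (Fin n) ℂ) (lam : Fin n → ℝ) : Type where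
  w : Fin n → Fin n → ℂ
  orth : ∀ i j, star (w i) ⬝ᵥ w j = if i = j then 1 else 0
  eig : ∀ i, H *ᵥ w i = (lam i : ℂ) • w i

namespace ES

variable {H : Matrix (Fin n) (Fin n) ℂ} {lam : Fin n → ℝ}

noncomputable def coeff (s : ES H lam) (x : Fin n → ℂ) (j : Fin n) : ℂ :=
  star (s.w j) ⬝ᵥ x

lemma dot_comb (s : ES H lam) (c : Fin n → ℂ) (j : Fin n) :
    star (s.w j) ⬝ᵥ (∑ i, c i • s.w i) = c j := by
  rw [dot_sum]
  simp only [dotProduct_smul, s.orth, smul_eq_mul, mul_ite, mul_one, mul_zero]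
  simp [Finset.sum_ite_eq]

lemma li (s : ES H lam) : LinearIndependent ℂ s.w := by
  rw [Fintype.linearIndependent_iff]
  intro g hg j
  have h2 : star (s.w j) ⬝ᵥ (∑ i, g i • s.w i) = 0 := by rw [hg]; simp
  rwa [s.dot_comb g j] at h2

lemma span_top (s : ES H lam) : Submodule.span ℂ (Set.range s.w) = ⊤ := by
  apply s.li.span_eq_top_of_card_eq_finrank'
  simp [Module.finrank_fintype_fun_eq_card]

lemma decomp (s : ES H lam) (x : Fin n → ℂ) : x = ∑ j, s.coeff x j • s.w j := by
  have hx : x ∈ Submodule.span ℂ (Set.range s.w) := by rw [s.span_top]; trivial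
  obtain ⟨c, hc⟩ := (Submodule.mem_span_range_iff_exists_fun ℂ).1 hx
  have hcoeff : ∀ j, s.coeff x j = c j := fun j => by
    rw [coeff, ← hc, s.dot_comb c j]
  have h2 : ∑ j, s.coeff x j • s.w j = ∑ j, c j • s.w j :=
    Finset.sum_congr rfl fun j _ => by rw [hcoeff]
  rw [h2, hc]


lemma coeff_add (s : ES H lam) (x y : Fin n → ℂ) (j : Fin n) :
    s.coeff (x + y) j = s.coeff x j + s.coeff y j := by
  simp [coeff, dotProduct_add]

lemma coeff_smul (s : ES H lam) (c : ℂ) (x : Fin n → ℂ) (j : Fin n) :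
    s.coeff (c • x) j = c * s.coeff x j := by
  simp [coeff, dotProduct_smul, smul_eq_mul]

lemma star_dot_w (s : ES H lam) (x : Fin n → ℂ) (j : Fin n) :
    star x ⬝ᵥ s.w j = starRingEnd ℂ (s.coeff x j) := by
  rw [star_dot_comm]; rfl

lemma qf_eq (s : ES H lam) (x : Fin n → ℂ) :
    qf H x = ∑ j, lam j * Complex.normSq (s.coeff x j) := by
  have hmul : H *ᵥ x = ∑ j, ((lam j : ℂ) * s.coeff x j) • s.w j := by
    conv_lhs => rw [s.decomp x]
    have h1 : H *ᵥ (∑ j, s.coeff x j • s.w j) = ∑ j, s.coeff x j • (H *ᵥ s.w j) := by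
      simp only [← Matrix.mulVecLin_apply, map_sum, _root_.map_smul]
    rw [h1]
    refine Finset.sum_congr rfl fun j _ => ?_
    rw [s.eig j, smul_smul, mul_comm]
  have h2 : star x ⬝ᵥ H *ᵥ x
      = ∑ j, (lam j : ℂ) * (s.coeff x j * starRingEnd ℂ (s.coeff x j)) := by
    rw [hmul, dot_sum]
    refine Finset.sum_congr rfl fun j _ => ?_
    rw [dotProduct_smul, s.star_dot_w x j, smul_eq_mul]; ring
  rw [qf, h2]
  rw [Complex.re_sum]
  refine Finset.sum_congr rfl fun j _ => ?_
  rw [Complex.mul_conj]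
  rw [show ((lam j : ℂ) * (Complex.normSq (s.coeff x j) : ℂ))
      = ((lam j * Complex.normSq (s.coeff x j) : ℝ) : ℂ) by push_cast; ring]
  exact Complex.ofReal_re _

lemma nsq_eq (s : ES H lam) (x : Fin n → ℂ) :
    nsq x = ∑ j, Complex.normSq (s.coeff x j) := by
  have h2 : star x ⬝ᵥ x = ∑ j, (s.coeff x j * starRingEnd ℂ (s.coeff x j)) := by
    nth_rewrite 2 [s.decomp x]
    rw [dot_sum]
    refine Finset.sum_congr rfl fun j _ => ?_
    rw [dotProduct_smul, s.star_dot_w x j, smul_eq_mul]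
  have h3 : ((nsq x : ℝ) : ℂ) = ((∑ j, Complex.normSq (s.coeff x j) : ℝ) : ℂ) := by
    rw [← star_dot_self, h2]
    push_cast
    exact Finset.sum_congr rfl fun j _ => (Complex.mul_conj _)
  exact_mod_cast h3

lemma nsq_w (s : ES H lam) (j : Fin n) : nsq (s.w j) = 1 := by
  have := s.orth j j
  rw [if_pos rfl, star_dot_self] at this
  exact_mod_cast this

lemma trace_re (s : ES H lam) : (Matrix.trace H).re = ∑ j, lam j := by
  have hdiag : ∀ i, (H i i).re = qf H (Pi.single i 1) := by
    intro i
    have h1 : star (Pi.single i 1 : Fin n → ℂ) ⬝ᵥ (H *ᵥ Pi.single i 1) = H i i := by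
      have hs : (star (Pi.single i 1 : Fin n → ℂ)) = Pi.single i 1 := by
        ext r
        by_cases h : r = i
        · subst h; simp
        · simp [Pi.single_eq_of_ne h]
      rw [hs, single_dotProduct, one_mul, mulVec_single]
      simp
    rw [qf, h1]
  have hcoeff : ∀ j i, Complex.normSq (s.coeff (Pi.single i 1) j)
      = Complex.normSq (s.w j i) := by
    intro j i
    rw [coeff, dotProduct_single, mul_one, Pi.star_apply, RCLike.star_def,
      Complex.normSq_conj]
  rw [Matrix.trace, Complex.re_sum]
  calc ∑ i, (Matrix.diag H i).re = ∑ i, ∑ j, lam j * Complex.normSq (s.w j i) := by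
        refine Finset.sum_congr rfl fun i _ => ?_
        rw [Matrix.diag_apply, hdiag i, s.qf_eq]
        exact Finset.sum_congr rfl fun j _ => by rw [hcoeff j i]
    _ = ∑ j, lam j * (∑ i, Complex.normSq (s.w j i)) := by
        rw [Finset.sum_comm]
        exact Finset.sum_congr rfl fun j _ => by rw [Finset.mul_sum]
    _ = ∑ j, lam j := by
        refine Finset.sum_congr rfl fun j _ => ?_
        rw [show (∑ i, Complex.normSq (s.w j i)) = nsq (s.w j) from rfl, s.nsq_w, mul_one]

lemma coeff_vanish (s : ES H lam) {m : ℕ} (f : Fin m → Fin n) {x : Fin n → ℂ}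
    (hx : x ∈ Submodule.span ℂ (Set.range (s.w ∘ f))) {j : Fin n} (hj : ∀ a, f a ≠ j) :
    s.coeff x j = 0 := by
  induction hx using Submodule.span_induction with
  | mem y hy =>
      obtain ⟨a, rfl⟩ := hy
      have := s.orth j (f a)
      rw [if_neg (fun h => hj a h.symm)] at this
      exact this
  | zero => simp [coeff]
  | add y z _ _ hy hz => rw [s.coeff_add, hy, hz, add_zero]
  | smul c y _ hy => rw [s.coeff_smul, hy, mul_zero]

end ES

lemma key {M N : Matrix (Fin n) (Fin n) ℂ} {lamM lamN : Fin n → ℝ}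
    (sM : ES M lamM) (sN : ES N lamN) (hMa : Antitone lamM) (hNa : Antitone lamN)
    (t : ℝ) (hE : ∀ x, qf (M - N) x ≤ t * nsq x) (i : Fin n) :
    lamM i ≤ lamN i + t := by
  have hin : (i : ℕ) < n := i.isLt
  set f₁ : Fin (i.val + 1) → Fin n := fun a => ⟨a.val, by omega⟩ with hf₁def
  set f₂ : Fin (n - i.val) → Fin n := fun a => ⟨i.val + a.val, by omega⟩ with hf₂def
  have hf₁ : Function.Injective f₁ := by
    intro a b hab
    have := congrArg Fin.val hab
    simp only [hf₁def] at this
    exact Fin.ext this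
  have hf₂ : Function.Injective f₂ := by
    intro a b hab
    have := congrArg Fin.val hab
    simp only [hf₂def] at this
    exact Fin.ext (by omega)
  set V₁ := Submodule.span ℂ (Set.range (sM.w ∘ f₁)) with hV₁def
  set V₂ := Submodule.span ℂ (Set.range (sN.w ∘ f₂)) with hV₂def
  have hr₁ : Module.finrank ℂ V₁ = i.val + 1 := by
    rw [hV₁def, finrank_span_eq_card (sM.li.comp f₁ hf₁)]
    simp
  have hr₂ : Module.finrank ℂ V₂ = n - i.val := by
    rw [hV₂def, finrank_span_eq_card (sN.li.comp f₂ hf₂)]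
    simp
  have hsup : Module.finrank ℂ ↥(V₁ ⊔ V₂) ≤ n := by
    have h1 := Submodule.finrank_le (V₁ ⊔ V₂)
    rwa [Module.finrank_fintype_fun_eq_card, Fintype.card_fin] at h1
  have hinf : 0 < Module.finrank ℂ ↥(V₁ ⊓ V₂) := by
    have h2 := Submodule.finrank_sup_add_finrank_inf_eq V₁ V₂
    omega
  have hne : V₁ ⊓ V₂ ≠ ⊥ := by
    intro h
    rw [h, finrank_bot] at hinf
    exact lt_irrefl 0 hinf
  obtain ⟨x, hx, hx0⟩ := (Submodule.ne_bot_iff _).1 hne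
  have hx₁ : x ∈ V₁ := (Submodule.mem_inf.1 hx).1
  have hx₂ : x ∈ V₂ := (Submodule.mem_inf.1 hx).2
  have hcM : ∀ j : Fin n, ¬ (j ≤ i) → sM.coeff x j = 0 := by
    intro j hj
    refine sM.coeff_vanish f₁ hx₁ (fun a h => hj ?_)
    rw [← h]
    simp only [hf₁def, Fin.le_def]
    omega
  have hcN : ∀ j : Fin n, ¬ (i ≤ j) → sN.coeff x j = 0 := by
    intro j hj
    refine sN.coeff_vanish f₂ hx₂ (fun a h => hj ?_)
    rw [← h]
    simp only [hf₂def, Fin.le_def]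
    omega
  have hqM : lamM i * nsq x ≤ qf M x := by
    rw [sM.qf_eq, sM.nsq_eq x, Finset.mul_sum]
    refine Finset.sum_le_sum fun j _ => ?_
    by_cases hj : j ≤ i
    · exact mul_le_mul_of_nonneg_right (hMa hj) (Complex.normSq_nonneg _)
    · rw [hcM j hj]; simp
  have hqN : qf N x ≤ lamN i * nsq x := by
    rw [sN.qf_eq, sN.nsq_eq x, Finset.mul_sum]
    refine Finset.sum_le_sum fun j _ => ?_
    by_cases hj : i ≤ j
    · exact mul_le_mul_of_nonneg_right (hNa hj) (Complex.normSq_nonneg _)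
    · rw [hcN j hj]; simp
  have hsplit : qf M x = qf N x + qf (M - N) x := by
    rw [← qf_add]
    congr 1
    abel
  have hmain : lamM i * nsq x ≤ (lamN i + t) * nsq x := by
    calc lamM i * nsq x ≤ qf M x := hqM
      _ = qf N x + qf (M - N) x := hsplit
      _ ≤ lamN i * nsq x + t * nsq x := add_le_add hqN (hE x)
      _ = (lamN i + t) * nsq x := by ring
  exact le_of_mul_le_mul_right hmain (nsq_pos_of_ne_zero hx0)

/-- Build an eigensystem from the spectral theorem, with eigenvalues permuted by `e`. -/
noncomputable def mkES {H : Matrix (Fin n) (Fin n) ℂ} (hH : H.IsHermitian)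
    (e : Equiv.Perm (Fin n)) : ES H (hH.eigenvalues ∘ e) where
  w := fun i => ⇑(hH.eigenvectorBasis (e i))
  orth := by
    intro i j
    have horth := hH.eigenvectorBasis.orthonormal
    rw [orthonormal_iff_ite] at horth
    have h1 := horth (e i) (e j)
    rw [EuclideanSpace.inner_eq_star_dotProduct] at h1
    rw [dotProduct_comm]
    simpa [EmbeddingLike.apply_eq_iff_eq] using h1
  eig := by
    intro i
    have h1 := hH.mulVec_eigenvectorBasis (e i)
    rw [h1]
    funext r
    simp [Complex.real_smul]

/-- Permutation sorting a tuple in decreasing order. -/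
noncomputable def sortPerm (f : Fin n → ℝ) : Equiv.Perm (Fin n) :=
  (Fin.revPerm).trans (Tuple.sort f)

lemma antitone_comp_sortPerm (f : Fin n → ℝ) : Antitone (f ∘ (sortPerm f)) := by
  intro i j hij
  have h1 := Tuple.monotone_sort f (Fin.rev_le_rev.2 hij)
  simpa [sortPerm] using h1

lemma exists_sorted_ES {H : Matrix (Fin n) (Fin n) ℂ} (hH : H.IsHermitian) :
    ∃ lam : Fin n → ℝ, Antitone lam ∧ Nonempty (ES H lam) := by
  refine ⟨hH.eigenvalues ∘ sortPerm hH.eigenvalues,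
    antitone_comp_sortPerm hH.eigenvalues, ⟨mkES hH (sortPerm hH.eigenvalues)⟩⟩

/-- Eigensystem of `-H` with reversed order. -/
noncomputable def ES.negRev {H : Matrix (Fin n) (Fin n) ℂ} {lam : Fin n → ℝ}
    (s : ES H lam) : ES (-H) (fun i => - lam (Fin.rev i)) where
  w := fun i => s.w (Fin.rev i)
  orth := by
    intro i j
    rw [s.orth]
    simp [Fin.rev_inj]
  eig := by
    intro i
    rw [neg_mulVec, s.eig]
    push_cast
    rw [neg_smul]

lemma sum_mulVec {m : ℕ} (F : Fin m → Matrix (Fin n) (Fin n) ℂ) (x : Fin n → ℂ) :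
    (∑ i, F i) *ᵥ x = ∑ i, F i *ᵥ x := by
  funext r
  simp only [mulVec, dotProduct, Finset.sum_apply, Matrix.sum_apply, Finset.sum_mul]
  exact Finset.sum_comm

lemma rank1_mulVec (u x : Fin n → ℂ) :
    vecMulVec u (star u) *ᵥ x = (star u ⬝ᵥ x) • u := by
  funext r
  simp only [vecMulVec, mulVec, dotProduct, Pi.smul_apply, smul_eq_mul, of_apply,
    Finset.sum_mul]
  exact Finset.sum_congr rfl fun s _ => by ring

lemma rank1_herm (u : Fin n → ℂ) : (vecMulVec u (star u)).IsHermitian := by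
  rw [Matrix.IsHermitian]
  funext i j
  simp [vecMulVec, conjTranspose_apply, mul_comm]

lemma qf_sub (M N : Matrix (Fin n) (Fin n) ℂ) (x : Fin n → ℂ) :
    qf (M - N) x = qf M x - qf N x := by
  have h := qf_add N (M - N) x
  rw [show N + (M - N) = M by abel] at h
  linarith

lemma trace_rank1 (u : Fin n → ℂ) :
    Matrix.trace (vecMulVec u (star u)) = star u ⬝ᵥ u := by
  simp only [Matrix.trace, Matrix.diag, vecMulVec, dotProduct, of_apply, Pi.star_apply]
  exact Finset.sum_congr rfl fun r _ => mul_comm _ _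

lemma card_filter_lt {k : ℕ} (hk : k ≤ n) :
    ((Finset.univ : Finset (Fin n)).filter (fun j : Fin n => (j : ℕ) < k)).card = k := by
  have himg : ((Finset.univ : Finset (Fin n)).filter (fun j : Fin n => (j : ℕ) < k)).image Fin.val
      = Finset.range k := by
    ext a
    simp only [Finset.mem_image, Finset.mem_filter, Finset.mem_univ, true_and,
      Finset.mem_range]
    exact ⟨fun ⟨j, hj, hja⟩ => hja ▸ hj, fun ha => ⟨⟨a, lt_of_lt_of_le ha hk⟩, ha, rfl⟩⟩
  rw [← Finset.card_image_of_injective _ Fin.val_injective, himg, Finset.card_range]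

/-- Lidskii's theorem, subset form: for any index set `S` of size `k`,
`∑_{i ∈ S} (λᵢ(X+Y) − λᵢ(X)) ≤ ∑_{j < k} λⱼ(Y)` (all tuples sorted decreasingly). -/
theorem lidskii {X Y : Matrix (Fin n) (Fin n) ℂ} (hX : X.IsHermitian)
    {lamX lamY lamZ : Fin n → ℝ}
    (sX : ES X lamX) (sY : ES Y lamY) (sZ : ES (X + Y) lamZ)
    (hXa : Antitone lamX) (hYa : Antitone lamY) (hZa : Antitone lamZ)
    (S : Finset (Fin n)) :
    ∑ i ∈ S, (lamZ i - lamX i) ≤ ∑ i : Fin n, if (i : ℕ) < S.card then lamY i else 0 := by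
  set k := S.card with hk
  have hkn : k ≤ n := by simpa [hk] using Finset.card_le_univ S
  rcases Nat.eq_zero_or_pos k with hk0 | hkpos
  · have hS : S = ∅ := Finset.card_eq_zero.1 (by omega)
    rw [hS]
    simp only [Finset.sum_empty]
    refine Finset.sum_nonneg fun i _ => ?_
    rw [if_neg (by omega)]
  · set t := lamY ⟨k - 1, by omega⟩ with ht
    set m : Fin n → ℝ := fun j => max (lamY j - t) 0 with hm
    set Y₁ : Matrix (Fin n) (Fin n) ℂ :=
      ∑ j, (m j : ℂ) • vecMulVec (sY.w j) (star (sY.w j)) with hY₁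
    have hY₁herm : Y₁.IsHermitian := by
      show Y₁ᴴ = Y₁
      rw [hY₁, Matrix.conjTranspose_sum]
      refine Finset.sum_congr rfl fun j _ => ?_
      rw [Matrix.conjTranspose_smul, rank1_herm (sY.w j)]
      congr 1
      simp [RCLike.star_def, Complex.conj_ofReal]
    have hY₁mulVec : ∀ x : Fin n → ℂ,
        Y₁ *ᵥ x = ∑ j, (m j : ℂ) • (sY.coeff x j • sY.w j) := by
      intro x
      rw [hY₁, sum_mulVec]
      refine Finset.sum_congr rfl fun j _ => ?_
      rw [Matrix.smul_mulVec, rank1_mulVec]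
      rfl
    have hqfY₁ : ∀ x : Fin n → ℂ,
        qf Y₁ x = ∑ j, m j * Complex.normSq (sY.coeff x j) := by
      intro x
      have h2 : star x ⬝ᵥ Y₁ *ᵥ x
          = ∑ j, (m j : ℂ) * (sY.coeff x j * starRingEnd ℂ (sY.coeff x j)) := by
        rw [hY₁mulVec x, dot_sum]
        refine Finset.sum_congr rfl fun j _ => ?_
        rw [dotProduct_smul, dotProduct_smul, sY.star_dot_w x j, smul_eq_mul, smul_eq_mul]
      rw [qf, h2, Complex.re_sum]
      refine Finset.sum_congr rfl fun j _ => ?_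
      rw [Complex.mul_conj]
      rw [show ((m j : ℂ) * (Complex.normSq (sY.coeff x j) : ℂ))
          = ((m j * Complex.normSq (sY.coeff x j) : ℝ) : ℂ) by push_cast; ring]
      exact Complex.ofReal_re _
    have hqfY₁nonneg : ∀ x : Fin n → ℂ, 0 ≤ qf Y₁ x := by
      intro x
      rw [hqfY₁ x]
      exact Finset.sum_nonneg fun j _ =>
        mul_nonneg (le_max_right _ _) (Complex.normSq_nonneg _)
    obtain ⟨lamP, hPa, ⟨sP⟩⟩ := exists_sorted_ES (hX.add hY₁herm)
    have ha : ∀ i, lamZ i ≤ lamP i + t := by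
      refine key sZ sP hZa hPa t (fun x => ?_)
      have hEq : (X + Y) - (X + Y₁) = Y - Y₁ := by abel
      rw [hEq, qf_sub, sY.qf_eq x, hqfY₁ x, ← Finset.sum_sub_distrib]
      have hle : ∑ j, (lamY j * Complex.normSq (sY.coeff x j)
            - m j * Complex.normSq (sY.coeff x j))
          ≤ ∑ j, t * Complex.normSq (sY.coeff x j) := by
        refine Finset.sum_le_sum fun j _ => ?_
        have h3 : lamY j - t ≤ m j := by
          simp only [hm]
          exact le_max_left _ _
        nlinarith [Complex.normSq_nonneg (sY.coeff x j),
          mul_le_mul_of_nonneg_right (show lamY j - m j ≤ t by linarith)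
            (Complex.normSq_nonneg (sY.coeff x j))]
      calc _ ≤ ∑ j, t * Complex.normSq (sY.coeff x j) := hle
        _ = t * nsq x := by rw [← Finset.mul_sum, ← sY.nsq_eq]
    have hb : ∀ i, lamX i ≤ lamP i := by
      intro i
      have h4 := key sX sP hXa hPa 0 (fun x => ?_) i
      · linarith
      · rw [show X - (X + Y₁) = -Y₁ by abel]
        have h5 : qf (-Y₁) x = - qf Y₁ x := by
          have h6 := qf_add Y₁ (-Y₁) x
          rw [show Y₁ + -Y₁ = (0 : Matrix (Fin n) (Fin n) ℂ) by abel] at h6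
          have h7 : qf (0 : Matrix (Fin n) (Fin n) ℂ) x = 0 := by
            simp [qf, Matrix.zero_mulVec]
          linarith
        rw [h5, zero_mul]
        linarith [hqfY₁nonneg x]
    have htrY₁ : (Matrix.trace Y₁).re = ∑ j, m j := by
      rw [hY₁, Matrix.trace_sum]
      have h8 : ∀ j : Fin n, Matrix.trace ((m j : ℂ) • vecMulVec (sY.w j) (star (sY.w j)))
          = (m j : ℂ) := by
        intro j
        rw [Matrix.trace_smul, trace_rank1, sY.orth j j, if_pos rfl]
        simp
      rw [Finset.sum_congr rfl fun j _ => h8 j, Complex.re_sum]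
      exact Finset.sum_congr rfl fun j _ => Complex.ofReal_re _
    have hc : ∑ i, (lamP i - lamX i) = ∑ j, m j := by
      rw [Finset.sum_sub_distrib, ← sP.trace_re, ← sX.trace_re, Matrix.trace_add,
        Complex.add_re, ← htrY₁]
      ring
    have hmsum : ∑ j, m j = (∑ j : Fin n, if (j : ℕ) < k then lamY j else 0) - k * t := by
      have h1 : ∀ j : Fin n, m j
          = (if (j : ℕ) < k then lamY j else 0) - (if (j : ℕ) < k then t else 0) := by
        intro j
        by_cases hj : (j : ℕ) < k
        · have hle2 : t ≤ lamY j := hYa (by rw [Fin.le_def]; simpa using by omega)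
          simp only [hm, if_pos hj]
          rw [max_eq_left (by linarith)]
        · have hle2 : lamY j ≤ t := hYa (by rw [Fin.le_def]; simpa using by omega)
          simp only [hm, if_neg hj]
          rw [max_eq_right (by linarith)]
          ring
      rw [Finset.sum_congr rfl fun j _ => h1 j, Finset.sum_sub_distrib]
      congr 1
      rw [← Finset.sum_filter, Finset.sum_const, card_filter_lt hkn, nsmul_eq_mul]
    have hd1 : ∑ i ∈ S, (lamZ i - lamX i) ≤ ∑ i ∈ S, (lamP i - lamX i) + k * t := by
      have h9 : ∑ i ∈ S, (lamZ i - lamX i) ≤ ∑ i ∈ S, (lamP i + t - lamX i) :=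
        Finset.sum_le_sum fun i _ => by have := ha i; linarith
      have h10 : ∑ i ∈ S, (lamP i + t - lamX i)
          = ∑ i ∈ S, (lamP i - lamX i) + ∑ i ∈ S, t := by
        rw [← Finset.sum_add_distrib]
        exact Finset.sum_congr rfl fun i _ => by ring
      rw [Finset.sum_const, ← hk, nsmul_eq_mul] at h10
      linarith
    have hd2 : ∑ i ∈ S, (lamP i - lamX i) ≤ ∑ i, (lamP i - lamX i) :=
      Finset.sum_le_sum_of_subset_of_nonneg (Finset.subset_univ S)
        (fun i _ _ => by have := hb i; linarith)
    calc ∑ i ∈ S, (lamZ i - lamX i) ≤ ∑ i ∈ S, (lamP i - lamX i) + k * t := hd1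
      _ ≤ ∑ i, (lamP i - lamX i) + k * t := by linarith
      _ = ∑ j, m j + k * t := by rw [hc]
      _ = ∑ j : Fin n, if (j : ℕ) < k then lamY j else 0 := by rw [hmsum]; ring

lemma abel_identity (g d : ℕ → ℝ) (N : ℕ) :
    ∑ i ∈ Finset.range N, g i * d i
      = (∑ k ∈ Finset.range N, (g k - g (k + 1)) * (∑ i ∈ Finset.range (k + 1), d i))
        + g N * (∑ i ∈ Finset.range N, d i) := by
  induction N with
  | zero => simp
  | succ N ih =>
      rw [Finset.sum_range_succ, ih, Finset.sum_range_succ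
        (fun k => (g k - g (k + 1)) * (∑ i ∈ Finset.range (k + 1), d i)),
        Finset.sum_range_succ d]
      ring

lemma fin_ite_sum (f : Fin n → ℝ) (k : ℕ) :
    (∑ i : Fin n, if (i : ℕ) < k then f i else 0)
      = ∑ a ∈ Finset.range n,
          (if h : a < n then (if a < k then f ⟨a, h⟩ else 0) else 0) := by
  rw [← Fin.sum_univ_eq_sum_range]
  refine Finset.sum_congr rfl fun i _ => ?_
  simp [i.isLt]

lemma range_filter_lt {k : ℕ} (hk : k ≤ n) :
    (Finset.range n).filter (fun a => a < k) = Finset.range k := by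
  ext a
  simp only [Finset.mem_filter, Finset.mem_range]
  omega

/-- If `x` is majorized by `y` (both antitone, `y ≥ 0`, equal totals), then
`∏ y ≤ ∏ x`. -/
lemma prod_le_prod_of_major {x y : Fin n → ℝ} (hx : Antitone x) (hy : Antitone y)
    (hy0 : ∀ i, 0 ≤ y i)
    (hmaj : ∀ k : ℕ, k ≤ n → (∑ i : Fin n, if (i : ℕ) < k then x i else 0)
        ≤ ∑ i : Fin n, if (i : ℕ) < k then y i else 0)
    (htot : ∑ i, x i = ∑ i, y i) :
    ∏ i, y i ≤ ∏ i, x i := by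
  rcases Nat.eq_zero_or_pos n with hn0 | hn
  · subst hn0; simp
  have hn1 : n - 1 < n := by omega
  set last : Fin n := ⟨n - 1, hn1⟩ with hlastdef
  have hle_last : ∀ i : Fin n, i ≤ last := by
    intro i
    rw [Fin.le_def]
    simp only [hlastdef]
    omega
  have hsum_split : ∀ f : Fin n → ℝ,
      ∑ i, f i = (∑ i : Fin n, if (i : ℕ) < n - 1 then f i else 0) + f last := by
    intro f
    have h := Finset.sum_filter_add_sum_filter_not Finset.univ
      (fun i : Fin n => (i : ℕ) < n - 1) f
    have hsingle : Finset.univ.filter (fun i : Fin n => ¬ (i : ℕ) < n - 1) = {last} := by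
      ext i
      simp only [Finset.mem_filter, Finset.mem_univ, true_and, Finset.mem_singleton,
        Fin.ext_iff, hlastdef]
      omega
    rw [hsingle, Finset.sum_singleton, Finset.sum_filter] at h
    linarith
  have hxylast : y last ≤ x last := by
    have h1 := hmaj (n - 1) (by omega)
    have h2 := hsum_split x
    have h3 := hsum_split y
    linarith
  by_cases hylast : y last = 0
  · rw [Finset.prod_eq_zero (Finset.mem_univ last) hylast]
    refine Finset.prod_nonneg fun i _ => ?_
    have := hx (hle_last i)
    linarith [hxylast, hylast ▸ le_refl (0:ℝ)]
  · have hylastpos : 0 < y last := lt_of_le_of_ne (hy0 last) (Ne.symm hylast)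
    have hypos : ∀ i, 0 < y i := fun i => lt_of_lt_of_le hylastpos (hy (hle_last i))
    have hxlastpos : 0 < x last := lt_of_lt_of_le hylastpos hxylast
    have hxpos : ∀ i, 0 < x i := fun i => lt_of_lt_of_le hxlastpos (hx (hle_last i))
    set d : ℕ → ℝ := fun a => if h : a < n then y ⟨a, h⟩ - x ⟨a, h⟩ else 0 with hd
    set g : ℕ → ℝ := fun a => (x ⟨min a (n - 1), by omega⟩)⁻¹ with hg
    have hgmono : Monotone g := by
      intro a b hab
      simp only [hg]
      have hfin : (⟨min a (n - 1), by omega⟩ : Fin n) ≤ ⟨min b (n - 1), by omega⟩ := by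
        rw [Fin.le_def]
        simp only []
        omega
      exact inv_anti₀ (hxpos _) (hx hfin)
    have hconv : ∀ k, k ≤ n → ∑ a ∈ Finset.range k, d a
        = (∑ i : Fin n, if (i : ℕ) < k then y i else 0)
          - (∑ i : Fin n, if (i : ℕ) < k then x i else 0) := by
      intro k hkn
      rw [fin_ite_sum y k, fin_ite_sum x k, ← Finset.sum_sub_distrib]
      have h4 : ∀ a ∈ Finset.range n,
          ((if h : a < n then (if a < k then y ⟨a, h⟩ else 0) else 0)
            - (if h : a < n then (if a < k then x ⟨a, h⟩ else 0) else 0))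
          = if a < k then d a else 0 := by
        intro a ha
        have han : a < n := Finset.mem_range.1 ha
        by_cases hak : a < k
        · simp only [dif_pos han, if_pos hak, hd]
        · simp only [dif_pos han, if_neg hak]
          ring
      rw [Finset.sum_congr rfl h4, ← Finset.sum_filter, range_filter_lt hkn]
    have hDn0 : ∑ a ∈ Finset.range n, d a = 0 := by
      rw [hconv n le_rfl]
      have h5 : (∑ i : Fin n, if (i : ℕ) < n then y i else 0) = ∑ i, y i :=
        Finset.sum_congr rfl fun i _ => if_pos i.isLt
      have h6 : (∑ i : Fin n, if (i : ℕ) < n then x i else 0) = ∑ i, x i :=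
        Finset.sum_congr rfl fun i _ => if_pos i.isLt
      rw [h5, h6, htot]
      ring
    have hDnonneg : ∀ k, k ≤ n → 0 ≤ ∑ a ∈ Finset.range k, d a := by
      intro k hkn
      rw [hconv k hkn]
      have := hmaj k hkn
      linarith
    have habel := abel_identity g d n
    have hsum_nonpos : ∑ a ∈ Finset.range n, g a * d a ≤ 0 := by
      rw [habel, hDn0, mul_zero, add_zero]
      refine Finset.sum_nonpos fun k hk => ?_
      have hk1 : k + 1 ≤ n := Finset.mem_range.1 hk
      exact mul_nonpos_of_nonpos_of_nonneg (by linarith [hgmono (Nat.le_succ k)])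
        (hDnonneg (k + 1) hk1)
    have hlog : ∑ i : Fin n, (Real.log (y i) - Real.log (x i))
        ≤ ∑ a ∈ Finset.range n, g a * d a := by
      rw [show (∑ i : Fin n, (Real.log (y i) - Real.log (x i)))
          = ∑ a ∈ Finset.range n, (if h : a < n
              then Real.log (y ⟨a, h⟩) - Real.log (x ⟨a, h⟩) else 0) by
        rw [← Fin.sum_univ_eq_sum_range]
        exact Finset.sum_congr rfl fun i _ => by simp [i.isLt]]
      refine Finset.sum_le_sum fun a ha => ?_
      have han : a < n := Finset.mem_range.1 ha
      rw [dif_pos han]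
      have hmineq : (⟨min a (n - 1), by omega⟩ : Fin n) = ⟨a, han⟩ := by
        rw [Fin.ext_iff]
        simp only []
        omega
      have hgval : g a = (x ⟨a, han⟩)⁻¹ := by rw [hg]; simp only []; rw [hmineq]
      have hdval : d a = y ⟨a, han⟩ - x ⟨a, han⟩ := by rw [hd]; simp only [dif_pos han]
      rw [hgval, hdval]
      have hxp := hxpos ⟨a, han⟩
      have hyp := hypos ⟨a, han⟩
      have h7 : Real.log (y ⟨a, han⟩ / x ⟨a, han⟩) ≤ y ⟨a, han⟩ / x ⟨a, han⟩ - 1 :=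
        Real.log_le_sub_one_of_pos (div_pos hyp hxp)
      rw [Real.log_div (ne_of_gt hyp) (ne_of_gt hxp)] at h7
      have h8 : y ⟨a, han⟩ / x ⟨a, han⟩ - 1 = (y ⟨a, han⟩ - x ⟨a, han⟩) * (x ⟨a, han⟩)⁻¹ := by
        field_simp
      rw [h8] at h7
      linarith [h7]
    have hlog2 : ∑ i : Fin n, Real.log (y i) ≤ ∑ i : Fin n, Real.log (x i) := by
      rw [Finset.sum_sub_distrib] at hlog
      linarith [hsum_nonpos]
    calc ∏ i, y i = Real.exp (∑ i, Real.log (y i)) := by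
          rw [Real.exp_sum]
          exact Finset.prod_congr rfl fun i _ => (Real.exp_log (hypos i)).symm
      _ ≤ Real.exp (∑ i, Real.log (x i)) := Real.exp_le_exp.2 hlog2
      _ = ∏ i, x i := by
          rw [Real.exp_sum]
          exact Finset.prod_congr rfl fun i _ => Real.exp_log (hxpos i)

lemma qf_neg (M : Matrix (Fin n) (Fin n) ℂ) (x : Fin n → ℂ) : qf (-M) x = - qf M x := by
  simp [qf, neg_mulVec, dotProduct_neg]

end FiedlerAux

open FiedlerAux


/-- Ordered case of Fiedler's inequality: if `lamA`, `lamB` enumerate the eigenvalues of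
Hermitian matrices `A`, `B` in decreasing order and `λₙ(A) + λₙ(B) ≥ 0`, then
`∏ᵢ (λᵢ(A) + λᵢ(B)) ≤ det(A+B) ≤ ∏ᵢ (λᵢ(A) + λ_{n−i+1}(B))`. -/
theorem fiedler_det_add_ordered {n : ℕ} (hn : 0 < n) (A B : Matrix (Fin n) (Fin n) ℂ)
    (hA : A.IsHermitian) (hB : B.IsHermitian)
    (lamA lamB : Fin n → ℝ)
    (hlamA : ∃ e : Equiv.Perm (Fin n), lamA = hA.eigenvalues ∘ e)
    (hlamB : ∃ e : Equiv.Perm (Fin n), lamB = hB.eigenvalues ∘ e)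
    (hA_anti : Antitone lamA) (hB_anti : Antitone lamB)
    (hlast : 0 ≤ lamA ⟨n - 1, by omega⟩ + lamB ⟨n - 1, by omega⟩) :
    (∏ i, (lamA i + lamB i)) ≤ (A + B).det.re ∧
    (A + B).det.re ≤ ∏ i, (lamA i + lamB i.rev) := by
  classical
  obtain ⟨eA, heA⟩ := hlamA
  obtain ⟨eB, heB⟩ := hlamB
  have sA : ES A lamA := by rw [heA]; exact mkES hA eA
  have sB : ES B lamB := by rw [heB]; exact mkES hB eB
  set ν := (hA.add hB).eigenvalues with hν
  set eM := sortPerm ν with heM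
  set μ := ν ∘ eM with hμ
  have sM : ES (A + B) μ := mkES (hA.add hB) eM
  have hμa : Antitone μ := antitone_comp_sortPerm ν
  set lastF : Fin n := ⟨n - 1, by omega⟩ with hlastF
  have hle_last : ∀ i : Fin n, i ≤ lastF := by
    intro i
    rw [Fin.le_def, hlastF]
    show (i : ℕ) ≤ n - 1
    omega
  -- determinant identity
  have hdet : (A + B).det.re = ∏ i, μ i := by
    have h1 := (hA.add hB).det_eq_prod_eigenvalues
    rw [h1, ← hν]
    have h2 : (∏ i, ν i) = ∏ i, μ i := (Equiv.prod_comp eM ν).symm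
    rw [← h2]
    norm_cast
  -- totals
  have htotAB : ∑ i, μ i = ∑ i, lamA i + ∑ i, lamB i := by
    rw [← sA.trace_re, ← sB.trace_re, ← sM.trace_re, Matrix.trace_add, Complex.add_re]
  -- pointwise lower bound on μ
  have hμ0 : ∀ i, 0 ≤ μ i := by
    intro i
    have hq : ∀ x : Fin n → ℂ, qf (A - (A + B)) x ≤ (- lamB lastF) * nsq x := by
      intro x
      rw [show A - (A + B) = -B by abel, qf_neg]
      have h5 : lamB lastF * nsq x ≤ qf B x := by
        rw [sB.qf_eq x, sB.nsq_eq x, Finset.mul_sum]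
        exact Finset.sum_le_sum fun j _ =>
          mul_le_mul_of_nonneg_right (hB_anti (hle_last j)) (Complex.normSq_nonneg _)
      linarith
    have h6 := key sA sM hA_anti hμa _ hq i
    have h7 : lamA lastF ≤ lamA i := hA_anti (hle_last i)
    have h8 : 0 ≤ lamA lastF + lamB lastF := hlast
    linarith
  -- majorization: lower bound side
  have hmajlow : ∀ k : ℕ, k ≤ n →
      (∑ i : Fin n, if (i : ℕ) < k then μ i else 0)
        ≤ ∑ i : Fin n, if (i : ℕ) < k then (lamA i + lamB i) else 0 := by
    intro k hkn
    set S := Finset.univ.filter (fun i : Fin n => (i : ℕ) < k) with hS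
    have hcard : S.card = k := card_filter_lt hkn
    have h8 := lidskii hA sA sB sM hA_anti hB_anti hμa S
    rw [hcard] at h8
    rw [Finset.sum_sub_distrib] at h8
    have h9 : ∑ i ∈ S, μ i = ∑ i : Fin n, if (i : ℕ) < k then μ i else 0 :=
      Finset.sum_filter _ _
    have h10 : ∑ i ∈ S, lamA i = ∑ i : Fin n, if (i : ℕ) < k then lamA i else 0 :=
      Finset.sum_filter _ _
    have h11 : (∑ i : Fin n, if (i : ℕ) < k then (lamA i + lamB i) else 0)
        = (∑ i : Fin n, if (i : ℕ) < k then lamA i else 0)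
          + (∑ i : Fin n, if (i : ℕ) < k then lamB i else 0) := by
      rw [← Finset.sum_add_distrib]
      refine Finset.sum_congr rfl fun i _ => ?_
      by_cases hik : (i : ℕ) < k
      · simp [hik]
      · simp [hik]
    rw [h9, h10] at h8
    linarith
  -- lower bound conclusion
  have hsuma : Antitone (fun i => lamA i + lamB i) :=
    fun i j h => add_le_add (hA_anti h) (hB_anti h)
  have hsum0 : ∀ i, 0 ≤ lamA i + lamB i := by
    intro i
    have h7 : lamA lastF ≤ lamA i := hA_anti (hle_last i)
    have h8 : lamB lastF ≤ lamB i := hB_anti (hle_last i)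
    have h9 : 0 ≤ lamA lastF + lamB lastF := hlast
    linarith
  have htotlow : ∑ i, μ i = ∑ i, (lamA i + lamB i) := by
    rw [Finset.sum_add_distrib]
    exact htotAB
  have hlow := prod_le_prod_of_major hμa hsuma hsum0 hmajlow htotlow
  -- upper bound side
  set c : Fin n → ℝ := fun i => lamA i + lamB i.rev with hc
  set τ := sortPerm c with hτ
  set xs := c ∘ τ with hxs
  have hxsa : Antitone xs := antitone_comp_sortPerm c
  have hXa : Antitone (fun i : Fin n => - lamB (Fin.rev i)) := by
    intro i j hij
    simp only [neg_le_neg_iff]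
    exact hB_anti (Fin.rev_le_rev.2 hij)
  have sX : ES (-B) (fun i : Fin n => - lamB (Fin.rev i)) := sB.negRev
  have sZ : ES ((-B) + (A + B)) lamA := by
    rw [show (-B) + (A + B) = A by abel]
    exact sA
  have hmajup : ∀ k : ℕ, k ≤ n →
      (∑ i : Fin n, if (i : ℕ) < k then xs i else 0)
        ≤ ∑ i : Fin n, if (i : ℕ) < k then μ i else 0 := by
    intro k hkn
    set T := (Finset.univ.filter (fun a : Fin n => (a : ℕ) < k)).image τ with hT
    have hcard : T.card = k := by
      rw [hT, Finset.card_image_of_injective _ τ.injective, card_filter_lt hkn]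
    have h8 := lidskii hB.neg sX sM sZ hXa hμa hA_anti T
    rw [hcard] at h8
    have h9 : ∑ i ∈ T, (lamA i - (- lamB (Fin.rev i))) = ∑ i ∈ T, c i := by
      refine Finset.sum_congr rfl fun i _ => ?_
      rw [hc]
      ring
    have h10 : ∑ i ∈ T, c i
        = ∑ a ∈ Finset.univ.filter (fun a : Fin n => (a : ℕ) < k), c (τ a) := by
      rw [hT]
      exact Finset.sum_image fun a _ b _ hab => τ.injective hab
    have h11 : (∑ i : Fin n, if (i : ℕ) < k then xs i else 0)
        = ∑ a ∈ Finset.univ.filter (fun a : Fin n => (a : ℕ) < k), c (τ a) := by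
      rw [← Finset.sum_filter]
      exact Finset.sum_congr rfl fun a _ => rfl
    rw [h9, h10] at h8
    rw [h11]
    exact h8
  have htotup : ∑ i, xs i = ∑ i, μ i := by
    have h9 : ∑ i, xs i = ∑ i, c i := Equiv.sum_comp τ c
    have h10 : ∑ i : Fin n, lamB (Fin.rev i) = ∑ i, lamB i := by
      simpa using Equiv.sum_comp (Fin.revPerm) lamB
    have h12 : ∑ i, c i = ∑ i, lamA i + ∑ i : Fin n, lamB (Fin.rev i) := by
      rw [hc]
      exact Finset.sum_add_distrib
    rw [h9, h12, h10, htotAB]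
  have hup := prod_le_prod_of_major hxsa hμa hμ0 hmajup htotup
  have hprodxs : ∏ i, xs i = ∏ i, (lamA i + lamB i.rev) := Equiv.prod_comp τ c
  constructor
  · rw [hdet]
    exact hlow
  · rw [hdet]
    calc ∏ i, μ i ≤ ∏ i, xs i := hup
      _ = ∏ i, (lamA i + lamB i.rev) := hprodxs
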